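/- Let m, n be positive integers, let A be a real p×(mn) matrix, f ∈ ℝ^p, λ > 0, ρ₂ > 0, ε > 0. Let u ∈ ℝ^{m×n} and h ∈ ℝ^{m×n} × ℝ^{m×n} with ‖h‖₂ ≥ ε, set a = ‖∇u‖₁, and let b = −(a/ρ₂)·h/‖h‖₂³. Then the augmented Lagrangian satisfies L(u, h; b) = ‖∇u‖₁/‖h‖₂ + (λ/2)‖Au − f‖₂² + ρ₂⟨b, ∇u − h⟩ + (ρ₂/2)‖h − ∇u‖₂² ≥ a/‖h‖₂ − a²/(ρ₂ε⁴). -/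

import Mathlib

open Finset Filter

noncomputable def gradX (m n : ℕ) (u : Fin m → Fin n → ℝ) : Fin m → Fin n → ℝ :=
  fun i j => if h : (i : ℕ) + 1 < m then u ⟨(i : ℕ) + 1, h⟩ j - u i j else 0

noncomputable def gradY (m n : ℕ) (u : Fin m → Fin n → ℝ) : Fin m → Fin n → ℝ :=
  fun i j => if h : (j : ℕ) + 1 < n then u i ⟨(j : ℕ) + 1, h⟩ - u i j else 0

/-- The discrete forward-difference gradient operator `∇`. -/
noncomputable def grad (m n : ℕ) (u : Fin m → Fin n → ℝ) :
    (Fin m → Fin n → ℝ) × (Fin m → Fin n → ℝ) :=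
  (gradX m n u, gradY m n u)

/-- Squared Euclidean norm on `ℝ^{m×n}`. -/
noncomputable def mnorm2sq (m n : ℕ) (u : Fin m → Fin n → ℝ) : ℝ :=
  ∑ i, ∑ j, (u i j) ^ 2

/-- Euclidean norm on `ℝ^{m×n}`. -/
noncomputable def mnorm2 (m n : ℕ) (u : Fin m → Fin n → ℝ) : ℝ :=
  Real.sqrt (mnorm2sq m n u)

/-- Euclidean inner product on `ℝ^{m×n}`. -/
noncomputable def minner (m n : ℕ) (u v : Fin m → Fin n → ℝ) : ℝ :=
  ∑ i, ∑ j, u i j * v i j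

/-- Squared Euclidean norm on `ℝ^{m×n} × ℝ^{m×n}`. -/
noncomputable def pnorm2sq (m n : ℕ)
    (h : (Fin m → Fin n → ℝ) × (Fin m → Fin n → ℝ)) : ℝ :=
  mnorm2sq m n h.1 + mnorm2sq m n h.2

/-- Euclidean norm on `ℝ^{m×n} × ℝ^{m×n}`. -/
noncomputable def pnorm2 (m n : ℕ)
    (h : (Fin m → Fin n → ℝ) × (Fin m → Fin n → ℝ)) : ℝ :=
  Real.sqrt (pnorm2sq m n h)

/-- Euclidean inner product on `ℝ^{m×n} × ℝ^{m×n}`. -/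
noncomputable def pinner (m n : ℕ)
    (h g : (Fin m → Fin n → ℝ) × (Fin m → Fin n → ℝ)) : ℝ :=
  minner m n h.1 g.1 + minner m n h.2 g.2

/-- `‖∇u‖₁`, the (anisotropic) ℓ¹ norm of the discrete gradient. -/
noncomputable def gradL1 (m n : ℕ) (u : Fin m → Fin n → ℝ) : ℝ :=
  ∑ i, ∑ j, (|gradX m n u i j| + |gradY m n u i j|)

/-- View `u ∈ ℝ^{m×n}` as a vector in `ℝ^{mn}`. -/
noncomputable def flatten (m n : ℕ) (u : Fin m → Fin n → ℝ) : Fin m × Fin n → ℝ :=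
  fun ij => u ij.1 ij.2

/-- Squared Euclidean norm on `ℝ^p`. -/
noncomputable def vnorm2sq (p : ℕ) (v : Fin p → ℝ) : ℝ := ∑ k, (v k) ^ 2

/-- The augmented Lagrangian of the unconstrained `L₁/L₂` model:
`L(u, h; b) = ‖∇u‖₁/‖h‖₂ + (λ/2)‖Au − f‖₂² + ρ₂⟨b, ∇u − h⟩ + (ρ₂/2)‖h − ∇u‖₂²`. -/
noncomputable def augL (m n p : ℕ) (A : Matrix (Fin p) (Fin m × Fin n) ℝ) (f : Fin p → ℝ)
    (lam ρ₂ : ℝ) (u : Fin m → Fin n → ℝ)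
    (h b : (Fin m → Fin n → ℝ) × (Fin m → Fin n → ℝ)) : ℝ :=
  gradL1 m n u / pnorm2 m n h
    + lam / 2 * vnorm2sq p (A.mulVec (flatten m n u) - f)
    + ρ₂ * pinner m n b (grad m n u - h)
    + ρ₂ / 2 * pnorm2sq m n (h - grad m n u)

/-- Adjoint of `gradX` with respect to the Euclidean inner products. -/
noncomputable def gradTX (m n : ℕ) (q : Fin m → Fin n → ℝ) : Fin m → Fin n → ℝ :=
  fun i j =>
    (if 0 < (i : ℕ) then
        q ⟨(i : ℕ) - 1, Nat.lt_of_le_of_lt (Nat.sub_le _ _) i.isLt⟩ j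
      else 0)
      - (if (i : ℕ) + 1 < m then q i j else 0)

/-- Adjoint of `gradY` with respect to the Euclidean inner products. -/
noncomputable def gradTY (m n : ℕ) (q : Fin m → Fin n → ℝ) : Fin m → Fin n → ℝ :=
  fun i j =>
    (if 0 < (j : ℕ) then
        q i ⟨(j : ℕ) - 1, Nat.lt_of_le_of_lt (Nat.sub_le _ _) j.isLt⟩
      else 0)
      - (if (j : ℕ) + 1 < n then q i j else 0)

/-- `∇ᵀ`, the adjoint of the discrete gradient operator. -/
noncomputable def gradAdj (m n : ℕ)
    (h : (Fin m → Fin n → ℝ) × (Fin m → Fin n → ℝ)) : Fin m → Fin n → ℝ :=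
  fun i j => gradTX m n h.1 i j + gradTY m n h.2 i j


lemma minner_smul_left (m n : ℕ) (c : ℝ) (x y : Fin m → Fin n → ℝ) :
    minner m n (c • x) y = c * minner m n x y := by
  simp [minner, Finset.mul_sum, mul_assoc]

lemma pinner_smul_left (m n : ℕ) (c : ℝ)
    (x y : (Fin m → Fin n → ℝ) × (Fin m → Fin n → ℝ)) :
    pinner m n (c • x) y = c * pinner m n x y := by
  simp [pinner, minner_smul_left, mul_add]

lemma key1 (m n : ℕ) (ρ₂ c : ℝ) (hρ : 0 < ρ₂) (x y : Fin m → Fin n → ℝ) :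
    -(c ^ 2 / (2 * ρ₂)) * mnorm2sq m n x ≤
      ρ₂ / 2 * mnorm2sq m n (x - y) - c * minner m n x (y - x) := by
  simp only [mnorm2sq, minner, Finset.mul_sum, ← Finset.sum_sub_distrib]
  apply Finset.sum_le_sum; intro i _
  apply Finset.sum_le_sum; intro j _
  simp only [Pi.sub_apply]
  rw [← sub_nonneg]
  have e : ρ₂ / 2 * (x i j - y i j) ^ 2 - c * (x i j * (y i j - x i j))
      - -(c ^ 2 / (2 * ρ₂)) * x i j ^ 2
      = (ρ₂ * (x i j - y i j) + c * x i j) ^ 2 / (2 * ρ₂) := by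
    field_simp
    ring
  rw [e]
  positivity

lemma key (m n : ℕ) (ρ₂ c : ℝ) (hρ : 0 < ρ₂)
    (x y : (Fin m → Fin n → ℝ) × (Fin m → Fin n → ℝ)) :
    -(c ^ 2 / (2 * ρ₂)) * pnorm2sq m n x ≤
      ρ₂ / 2 * pnorm2sq m n (x - y) - c * pinner m n x (y - x) := by
  have h1 := key1 m n ρ₂ c hρ x.1 y.1
  have h2 := key1 m n ρ₂ c hρ x.2 y.2
  simp only [pnorm2sq, pinner, Prod.fst_sub, Prod.snd_sub]
  ring_nf
  ring_nf at h1 h2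
  linarith

/-- Lower bound on the augmented Lagrangian from the proof of the paper's
Theorem 4.4. -/
theorem stmt15 (m n p : ℕ) (hm : 0 < m) (hn : 0 < n)
    (A : Matrix (Fin p) (Fin m × Fin n) ℝ) (f : Fin p → ℝ)
    (lam ρ₂ ε : ℝ) (hlam : 0 < lam) (hρ : 0 < ρ₂) (hε : 0 < ε)
    (u : Fin m → Fin n → ℝ)
    (h : (Fin m → Fin n → ℝ) × (Fin m → Fin n → ℝ))
    (hh : ε ≤ pnorm2 m n h)
    (b : (Fin m → Fin n → ℝ) × (Fin m → Fin n → ℝ))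
    (hb : b = (-(gradL1 m n u / (ρ₂ * (pnorm2 m n h) ^ 3))) • h) :
    gradL1 m n u / pnorm2 m n h - (gradL1 m n u) ^ 2 / (ρ₂ * ε ^ 4) ≤
      augL m n p A f lam ρ₂ u h b := by
  set a := gradL1 m n u with ha
  set H := pnorm2 m n h with hH
  have hHpos : 0 < H := lt_of_lt_of_le hε hh
  have hHsq : H ^ 2 = pnorm2sq m n h := Real.sq_sqrt (by
    unfold pnorm2sq mnorm2sq; positivity)
  have hapos : 0 ≤ a := by
    unfold a; unfold gradL1
    apply Finset.sum_nonneg; intro i _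
    apply Finset.sum_nonneg; intro j _
    positivity
  have hdata : 0 ≤ lam / 2 * vnorm2sq p (A.mulVec (flatten m n u) - f) := by
    have : 0 ≤ vnorm2sq p (A.mulVec (flatten m n u) - f) := by
      unfold vnorm2sq; positivity
    positivity
  have hH0 : H ≠ 0 := ne_of_gt hHpos
  have hρ0 : ρ₂ ≠ 0 := ne_of_gt hρ
  set c : ℝ := a / H ^ 3 with hc
  have hbb : ρ₂ * pinner m n b (grad m n u - h) = -c * pinner m n h (grad m n u - h) := by
    rw [hb, pinner_smul_left, hc]
    field_simp
  have hkey := key m n ρ₂ c hρ h (grad m n u)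
  unfold augL
  rw [hbb]
  have hswap : pnorm2sq m n (h - grad m n u) = pnorm2sq m n (h - grad m n u) := rfl
  have hmain : -(c ^ 2 / (2 * ρ₂)) * pnorm2sq m n h ≤
      -c * pinner m n h (grad m n u - h) + ρ₂ / 2 * pnorm2sq m n (h - grad m n u) := by
    linarith [hkey]
  have hval : -(c ^ 2 / (2 * ρ₂)) * pnorm2sq m n h = -(a ^ 2 / (2 * ρ₂ * H ^ 4)) := by
    rw [← hHsq, hc]
    field_simp
  have hfinal : -(a ^ 2 / (ρ₂ * ε ^ 4)) ≤ -(a ^ 2 / (2 * ρ₂ * H ^ 4)) := by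
    have hε4 : ε ^ 4 ≤ H ^ 4 := by
      apply pow_le_pow_left₀ (le_of_lt hε) hh
    have h1 : a ^ 2 / (2 * ρ₂ * H ^ 4) ≤ a ^ 2 / (2 * ρ₂ * ε ^ 4) := by
      apply div_le_div_of_nonneg_left (by positivity) (by positivity)
      nlinarith
    have h2 : a ^ 2 / (2 * ρ₂ * ε ^ 4) ≤ a ^ 2 / (ρ₂ * ε ^ 4) := by
      apply div_le_div_of_nonneg_left (by positivity) (by positivity)
      nlinarith [pow_pos hε 4]
    linarith
  have : a / H - a ^ 2 / (ρ₂ * ε ^ 4) ≤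
      a / H + (-c * pinner m n h (grad m n u - h) + ρ₂ / 2 * pnorm2sq m n (h - grad m n u)) := by
    have := hval ▸ hmain
    have := hfinal.trans this
    linarith
  linarith
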